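/- Let σ : ℝ → ℝ be real analytic, monotonically increasing, with finite limit σ₋ at −∞ and limit σ₊ ∈ (σ₋, +∞] at +∞. Let x₁,…,x_n ∈ ℝ^{m'} satisfy ‖x_i‖₂² − ⟨x_i, x_j⟩ > γ > 0 for all i ≠ j, and let m ≥ n. Define M(w,b) ∈ ℝ^{n×(m+1)} by M(w,b)_{ij} = σ(w_jᵀx_i + b_j)/√m for j ≤ m and M(w,b)_{i,m+1} = 1, where w = (w₁,…,w_m) ∈ (ℝ^{m'})^m and b ∈ ℝ^m. Then the set {(w,b) : rank M(w,b) < n} has Lebesgue measure zero. -/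

import Mathlib

open Filter MeasureTheory Set
open scoped Matrix

/-- The property that every everywhere-analytic real-valued function which is not
identically zero has Lebesgue-null zero set. -/
def NullZeroProp (α : Type*) [NormedAddCommGroup α] [NormedSpace ℝ α]
    [MeasureSpace α] : Prop :=
  ∀ f : α → ℝ, (∀ x, AnalyticAt ℝ f x) → (∃ x, f x ≠ 0) →
    volume {x | f x = 0} = 0

theorem nullZeroProp_real : NullZeroProp ℝ := by
  intro f hf ⟨x₀, hx₀⟩
  have hcont : Continuous f := by
    rw [continuous_iff_continuousAt]; exact fun x => (hf x).continuousAt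
  set Z : Set ℝ := {x | f x = 0} with hZ
  have hcount : Z.Countable := by
    have hdisc : DiscreteTopology Z := by
      rw [discreteTopology_subtype_iff]
      intro z hz
      rw [Filter.inf_principal_eq_bot]
      have hfreq : ¬ (∃ᶠ w in nhdsWithin z {z}ᶜ, f w = 0) := by
        intro hfr
        have := AnalyticOnNhd.eqOn_zero_of_preconnected_of_frequently_eq_zero
          (f := f) (U := univ) (fun w _ => hf w) isPreconnected_univ (mem_univ z) hfr
        exact hx₀ (this (mem_univ x₀))
      rw [Filter.not_frequently] at hfreq
      filter_upwards [hfreq] with w hw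
      simpa [hZ] using hw
    have : TopologicalSpace.SeparableSpace Z := inferInstance
    rw [← Set.countable_coe_iff]
    exact (TopologicalSpace.separableSpace_iff_countable).mp this
  exact hcount.measure_zero _

theorem NullZeroProp.transfer {α β : Type*}
    [NormedAddCommGroup α] [NormedSpace ℝ α] [MeasureSpace α]
    [NormedAddCommGroup β] [NormedSpace ℝ β] [MeasureSpace β]
    [OpensMeasurableSpace β]
    (h : NullZeroProp α) (e : α ≃ᵐ β) (he : MeasurePreserving e volume volume)
    (L : α →L[ℝ] β) (hL : ∀ x, L x = e x) : NullZeroProp β := by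
  intro f hf ⟨y₀, hy₀⟩
  have hcont : Continuous f := by
    rw [continuous_iff_continuousAt]; exact fun x => (hf x).continuousAt
  have hmeas : MeasurableSet {y | f y = 0} :=
    (hcont.measurable (measurableSet_singleton 0) : MeasurableSet (f ⁻¹' {0}))
  have := he.measure_preimage hmeas.nullMeasurableSet
  rw [← this]
  have hpre : e ⁻¹' {y | f y = 0} = {x | (f ∘ L) x = 0} := by
    ext a; simp [hL a]
  rw [hpre]
  refine h (f ∘ L) (fun x => ((hf (L x)).comp (L.analyticAt x))) ⟨e.symm y₀, ?_⟩
  simp [Function.comp, hL, hy₀]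

theorem NullZeroProp.prod {α β : Type*}
    [NormedAddCommGroup α] [NormedSpace ℝ α] [MeasureSpace α]
    [NormedAddCommGroup β] [NormedSpace ℝ β] [MeasureSpace β]
    [OpensMeasurableSpace α] [OpensMeasurableSpace β] [SecondCountableTopology α]
    [SecondCountableTopology β]
    [SigmaFinite (volume : Measure α)] [SigmaFinite (volume : Measure β)]
    (hα : NullZeroProp α) (hβ : NullZeroProp β) : NullZeroProp (α × β) := by
  intro f hf ⟨p₀, hp₀⟩
  have hcont : Continuous f := by
    rw [continuous_iff_continuousAt]; exact fun x => (hf x).continuousAt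
  have hmeas : MeasurableSet {p : α × β | f p = 0} :=
    (hcont.measurable (measurableSet_singleton 0) : MeasurableSet (f ⁻¹' {0}))
  rw [Measure.volume_eq_prod, Measure.prod_apply hmeas]
  have hBnull : volume {a : α | f (a, p₀.2) = 0} = 0 := by
    refine hα _ (fun a => ?_) ⟨p₀.1, ?_⟩
    · have h1 : AnalyticAt ℝ (fun a : α => (a, p₀.2)) a :=
        analyticAt_id.prod analyticAt_const
      exact (AnalyticAt.comp (f := fun a : α => (a, p₀.2)) (hf (a, p₀.2)) h1 :
        AnalyticAt ℝ (f ∘ fun a : α => (a, p₀.2)) a)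
    simpa using hp₀
  have hae : (fun a => volume (Prod.mk a ⁻¹' {p : α × β | f p = 0}))
      =ᵐ[volume] (fun _ => (0 : ENNReal)) := by
    have hsub : {a : α | volume (Prod.mk a ⁻¹' {p : α × β | f p = 0}) ≠ 0}
        ⊆ {a : α | f (a, p₀.2) = 0} := by
      intro a ha
      by_contra hfa
      apply ha
      have : Prod.mk a ⁻¹' {p : α × β | f p = 0} = {b | (fun b => f (a, b)) b = 0} := rfl
      rw [this]
      refine hβ _ (fun b => ?_) ⟨p₀.2, hfa⟩
      have h1 : AnalyticAt ℝ (fun b : β => (a, b)) b :=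
        analyticAt_const.prod analyticAt_id
      exact (AnalyticAt.comp (f := fun b : β => (a, b)) (hf (a, b)) h1 :
        AnalyticAt ℝ (f ∘ fun b : β => (a, b)) b)
    exact measure_mono_null hsub hBnull
  rw [lintegral_congr_ae hae, lintegral_zero]

theorem NullZeroProp.pi {F : Type} [NormedAddCommGroup F] [NormedSpace ℝ F]
    [MeasureSpace F] [BorelSpace F] [SecondCountableTopology F]
    [SigmaFinite (volume : Measure F)]
    (hF : NullZeroProp F) : ∀ k, NullZeroProp (Fin k → F) := by
  intro k
  induction k with
  | zero =>
    intro f hf ⟨x₀, hx₀⟩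
    have : {x : Fin 0 → F | f x = 0} = ∅ := by
      ext a
      have ha : a = x₀ := funext fun i => absurd i.2 (Nat.not_lt_zero _)
      simp [ha, hx₀]
    rw [this]; exact measure_empty
  | succ k ih =>
    have hprod : NullZeroProp (F × (Fin k → F)) := hF.prod ih
    refine hprod.transfer (MeasurableEquiv.piFinSuccAbove (fun _ => F) 0).symm
      (volume_preserving_piFinSuccAbove (fun _ => F) 0).symm
      (ContinuousLinearMap.pi (fun i => Fin.cases (ContinuousLinearMap.fst ℝ F (Fin k → F))
        ((fun j => (ContinuousLinearMap.proj j).comp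
          (ContinuousLinearMap.snd ℝ F (Fin k → F)))) i)) ?_
    intro p
    funext i
    have : ((MeasurableEquiv.piFinSuccAbove (fun _ => F) 0).symm p) = Fin.insertNth 0 p.1 p.2 :=
      rfl
    rw [this, Fin.insertNth_zero]
    induction i using Fin.cases with
    | zero => simp
    | succ j => simp

theorem nullZeroProp_weights (m m' : ℕ) :
    NullZeroProp ((Fin m → Fin m' → ℝ) × (Fin m → ℝ)) := by
  have hF : NullZeroProp ((Fin m' → ℝ) × ℝ) :=
    (nullZeroProp_real.pi m').prod nullZeroProp_real
  have hPi : NullZeroProp (Fin m → ((Fin m' → ℝ) × ℝ)) := hF.pi m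
  refine hPi.transfer (MeasurableEquiv.arrowProdEquivProdArrow (Fin m' → ℝ) ℝ (Fin m))
    (volume_measurePreserving_arrowProdEquivProdArrow (Fin m' → ℝ) ℝ (Fin m))
    (ContinuousLinearMap.prod
      (ContinuousLinearMap.pi fun j => (ContinuousLinearMap.fst ℝ (Fin m' → ℝ) ℝ).comp
        (ContinuousLinearMap.proj j))
      (ContinuousLinearMap.pi fun j => (ContinuousLinearMap.snd ℝ (Fin m' → ℝ) ℝ).comp
        (ContinuousLinearMap.proj j))) ?_
  intro v
  rfl

theorem analyticAt_det {E : Type*} [NormedAddCommGroup E] [NormedSpace ℝ E]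
    {ι : Type*} [Fintype ι] [DecidableEq ι] (A : E → Matrix ι ι ℝ)
    (h : ∀ i j x, AnalyticAt ℝ (fun p => A p i j) x) (x : E) :
    AnalyticAt ℝ (fun p => (A p).det) x := by
  simp only [Matrix.det_apply, Units.smul_def, zsmul_eq_mul]
  exact Finset.analyticAt_fun_sum _ fun τ _ =>
    analyticAt_const.mul (Finset.analyticAt_fun_prod _ fun i _ => h (τ i) i x)

/-- Strict column diagonal dominance gives injectivity of `vecMul`. -/
theorem vecMul_eq_zero_dom {n : ℕ} (D : Matrix (Fin n) (Fin n) ℝ)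
    (hdom : ∀ j, ∑ i ∈ Finset.univ.erase j, |D i j| < D j j)
    (v : Fin n → ℝ) (hv : Matrix.vecMul v D = 0) : v = 0 := by
  by_contra hv0
  have hex : ∃ i, v i ≠ 0 := by
    by_contra h
    push_neg at h
    exact hv0 (funext fun i => h i)
  obtain ⟨i₀, hi₀⟩ := hex
  obtain ⟨i, -, hi⟩ := Finset.exists_max_image Finset.univ (fun i => |v i|)
    ⟨i₀, Finset.mem_univ _⟩
  have hvi : 0 < |v i| := lt_of_lt_of_le (abs_pos.mpr hi₀) (hi i₀ (Finset.mem_univ _))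
  have hrow : ∑ j, v j * D j i = 0 := by
    have := congrFun hv i
    simpa [Matrix.vecMul, dotProduct] using this
  have hsplit : v i * D i i = -∑ j ∈ Finset.univ.erase i, v j * D j i := by
    have h2 := Finset.add_sum_erase Finset.univ (fun j => v j * D j i) (Finset.mem_univ i)
    have h3 : v i * D i i + ∑ j ∈ Finset.univ.erase i, v j * D j i = 0 := by
      rw [h2]; exact hrow
    linarith
  have hDii : 0 < D i i :=
    lt_of_le_of_lt (Finset.sum_nonneg fun j _ => abs_nonneg _) (hdom i)
  have habs : |v i| * D i i ≤ ∑ j ∈ Finset.univ.erase i, |v j| * |D j i| := by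
    calc |v i| * D i i = |v i * D i i| := by
          rw [abs_mul, abs_of_pos hDii]
      _ = |∑ j ∈ Finset.univ.erase i, v j * D j i| := by rw [hsplit, abs_neg]
      _ ≤ ∑ j ∈ Finset.univ.erase i, |v j * D j i| := Finset.abs_sum_le_sum_abs _ _
      _ = ∑ j ∈ Finset.univ.erase i, |v j| * |D j i| := by simp [abs_mul]
  have hbound : ∑ j ∈ Finset.univ.erase i, |v j| * |D j i|
      ≤ |v i| * ∑ j ∈ Finset.univ.erase i, |D j i| := by
    rw [Finset.mul_sum]
    exact Finset.sum_le_sum fun j _ =>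
      mul_le_mul_of_nonneg_right (hi j (Finset.mem_univ _)) (abs_nonneg _)
  have : |v i| * D i i < |v i| * D i i :=
    lt_of_le_of_lt (le_trans habs hbound)
      (by exact (mul_lt_mul_iff_right₀ hvi).mpr (hdom i))
  exact lt_irrefl _ this

/-- For a real-analytic, monotone activation with finite limit `σ₋` at `−∞` and limit
`σ₊ ∈ (σ₋, +∞]` at `+∞`, separated data points `x₁,…,x_n`, and width `m ≥ n`, the set of
weights `(w,b)` for which the random feature matrix `M(w,b)` (with appended all-ones
column) has rank less than `n` is Lebesgue-null. -/
theorem stmt7 {n m m' : ℕ} (hmn : n ≤ m) (σ : ℝ → ℝ)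
    (hanalytic : ∀ t, AnalyticAt ℝ σ t) (hmono : Monotone σ) (σm : ℝ)
    (hbot : Tendsto σ atBot (nhds σm))
    (htop : Tendsto σ atTop atTop ∨ ∃ σp, σm < σp ∧ Tendsto σ atTop (nhds σp))
    (x : Fin n → Fin m' → ℝ) (γ : ℝ) (hγ : 0 < γ)
    (hsep : ∀ i j, i ≠ j → γ < (∑ k, x i k * x i k) - ∑ k, x i k * x j k) :
    volume {p : (Fin m → Fin m' → ℝ) × (Fin m → ℝ) |
      (Matrix.of fun i => Sum.elim
          (fun j => σ ((∑ k, p.1 j k * x i k) + p.2 j) / Real.sqrt m)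
          (fun _ : Unit => (1 : ℝ)) :
        Matrix (Fin n) (Fin m ⊕ Unit) ℝ).rank < n} = 0 := by
  classical
  rcases Nat.eq_zero_or_pos n with hn | hn
  · subst hn
    have : {p : (Fin m → Fin m' → ℝ) × (Fin m → ℝ) |
      (Matrix.of fun i => Sum.elim
          (fun j => σ ((∑ k, p.1 j k * x i k) + p.2 j) / Real.sqrt m)
          (fun _ : Unit => (1 : ℝ)) :
        Matrix (Fin 0) (Fin m ⊕ Unit) ℝ).rank < 0} = ∅ := by
      ext p; simp
    rw [this]; exact measure_empty
  set E := (Fin m → Fin m' → ℝ) × (Fin m → ℝ) with hE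
  set Mf : E → Matrix (Fin n) (Fin m ⊕ Unit) ℝ := fun p => Matrix.of fun i => Sum.elim
      (fun j => σ ((∑ k, p.1 j k * x i k) + p.2 j) / Real.sqrt m)
      (fun _ : Unit => (1 : ℝ)) with hMf
  have hgoal : {p : E |
      (Matrix.of fun i => Sum.elim
          (fun j => σ ((∑ k, p.1 j k * x i k) + p.2 j) / Real.sqrt m)
          (fun _ : Unit => (1 : ℝ)) :
        Matrix (Fin n) (Fin m ⊕ Unit) ℝ).rank < n} = {p : E | (Mf p).rank < n} := rfl
  rw [hgoal]
  set φ : E → ℝ := fun p => (Mf p * (Mf p).transpose).det with hφ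
  -- analyticity of φ
  have hMentry : ∀ (i : Fin n) (c : Fin m ⊕ Unit) (x₀ : E),
      AnalyticAt ℝ (fun p => Mf p i c) x₀ := by
    intro i c x₀
    cases c with
    | inl j =>
      have hc1 : AnalyticAt ℝ (fun p : E => p.1 j) x₀ :=
        ((ContinuousLinearMap.proj j).comp
          (ContinuousLinearMap.fst ℝ (Fin m → Fin m' → ℝ) (Fin m → ℝ))).analyticAt x₀
      have hlin : AnalyticAt ℝ (fun p : E => (∑ k, p.1 j k * x i k) + p.2 j) x₀ := by
        apply AnalyticAt.add
        · exact Finset.analyticAt_fun_sum _ fun k _ =>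
            (((ContinuousLinearMap.proj k).comp ((ContinuousLinearMap.proj j).comp
              (ContinuousLinearMap.fst ℝ (Fin m → Fin m' → ℝ) (Fin m → ℝ)))).analyticAt
                x₀).mul analyticAt_const
        · exact ((ContinuousLinearMap.proj j).comp
            (ContinuousLinearMap.snd ℝ (Fin m → Fin m' → ℝ) (Fin m → ℝ))).analyticAt x₀
      have : (fun p : E => Mf p i (Sum.inl j))
          = fun p : E => σ ((∑ k, p.1 j k * x i k) + p.2 j) * (Real.sqrt m)⁻¹ := by
        funext p; simp [hMf, div_eq_mul_inv]
      rw [this]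
      exact ((hanalytic _).comp hlin).mul analyticAt_const
    | inr u =>
      have : (fun p : E => Mf p i (Sum.inr u)) = fun _ : E => (1 : ℝ) := by
        funext p; simp [hMf]
      rw [this]; exact analyticAt_const
  have hφa : ∀ x₀ : E, AnalyticAt ℝ φ x₀ := by
    intro x₀
    apply analyticAt_det
    intro i i' y
    have : (fun p : E => (Mf p * (Mf p).transpose) i i')
        = fun p : E => ∑ c, Mf p i c * Mf p i' c := by
      funext p; simp [Matrix.mul_apply, Matrix.transpose_apply]
    rw [this]
    exact Finset.analyticAt_fun_sum _ fun c _ => (hMentry i c y).mul (hMentry i' c y)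
  -- witness
  have hm1 : 0 < m := lt_of_lt_of_le hn hmn
  have hsqm : Real.sqrt m ≠ 0 := ne_of_gt (Real.sqrt_pos.mpr (by exact_mod_cast hm1))
  have hσ_ge : ∀ t, σm ≤ σ t := fun t =>
    le_of_tendsto hbot (eventually_atBot.mpr ⟨t, fun s hs => hmono hs⟩)
  have hargtop : Tendsto (fun β : ℝ => β * γ / 2) atTop atTop :=
    (tendsto_id.atTop_mul_const hγ).atTop_div_const two_pos
  have h1 : Tendsto (fun β : ℝ => σ (-(β * γ / 2))) atTop (nhds σm) :=
    hbot.comp (tendsto_neg_atTop_atBot.comp hargtop)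
  have hL : Tendsto (fun β : ℝ => (n : ℝ) * (σ (-(β * γ / 2)) - σm)) atTop (nhds 0) := by
    have h3 : Tendsto (fun β : ℝ => (n : ℝ) * (σ (-(β * γ / 2)) - σm)) atTop
        (nhds ((n : ℝ) * (σm - σm))) := (h1.sub_const σm).const_mul _
    simpa using h3
  have hev : ∀ᶠ β in atTop,
      (n : ℝ) * (σ (-(β * γ / 2)) - σm) < σ (β * γ / 2) - σm := by
    rcases htop with hT | ⟨σp, hσp, hT⟩
    · have hR : Tendsto (fun β : ℝ => σ (β * γ / 2) - σm) atTop atTop := by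
        simpa [sub_eq_add_neg] using
          tendsto_atTop_add_const_right atTop (-σm) (hT.comp hargtop)
      filter_upwards [hL.eventually_lt_const zero_lt_one, hR.eventually_gt_atTop 1]
        with β hb1 hb2
      linarith
    · have hR : Tendsto (fun β : ℝ => σ (β * γ / 2) - σm) atTop (nhds (σp - σm)) :=
        (hT.comp hargtop).sub_const σm
      exact hL.eventually_lt hR (by linarith)
  obtain ⟨β, hβkey, hβ0⟩ := (hev.and (eventually_ge_atTop (0 : ℝ))).exists
  set w : Fin m → Fin m' → ℝ := fun j k =>
    if h : (j : ℕ) < n then β * x ⟨j, h⟩ k else 0 with hwdef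
  set b : Fin m → ℝ := fun j =>
    if h : (j : ℕ) < n then β * γ / 2 - β * (∑ k, x ⟨j, h⟩ k * x ⟨j, h⟩ k) else 0 with hbdef
  set p₀ : E := (w, b) with hp₀def
  set J : Fin n → Fin m := Fin.castLE hmn with hJdef
  have hJlt : ∀ i' : Fin n, ((J i' : ℕ)) < n := fun i' => by
    simpa [hJdef] using i'.isLt
  have hJx : ∀ i' : Fin n, (⟨(J i' : ℕ), hJlt i'⟩ : Fin n) = i' := fun i' => by
    apply Fin.ext; simp [hJdef]
  set A : Fin n → Fin n → ℝ := fun i i' => (∑ k, w (J i') k * x i k) + b (J i') with hAdef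
  have hwx : ∀ (i' : Fin n) (k : Fin m'), w (J i') k = β * x i' k := by
    intro i' k
    rw [hwdef]
    simp only [dif_pos (hJlt i')]
    rw [hJx i']
  have hbx : ∀ i' : Fin n, b (J i') = β * γ / 2 - β * (∑ k, x i' k * x i' k) := by
    intro i'
    rw [hbdef]
    simp only [dif_pos (hJlt i')]
    rw [hJx i']
  have hAeq : ∀ i i', A i i' =
      β * γ / 2 - β * ((∑ k, x i' k * x i' k) - ∑ k, x i' k * x i k) := by
    intro i i'
    rw [hAdef]
    simp only [hwx, hbx]
    have : ∑ k, β * x i' k * x i k = β * ∑ k, x i' k * x i k := by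
      rw [Finset.mul_sum]; exact Finset.sum_congr rfl fun k _ => by ring
    rw [this]; ring
  have hAdiag : ∀ i', A i' i' = β * γ / 2 := by
    intro i'; rw [hAeq]; ring
  have hAoff : ∀ i i', i ≠ i' → A i i' ≤ -(β * γ / 2) := by
    intro i i' hne
    have hs := hsep i' i hne.symm
    have : β * γ ≤ β * ((∑ k, x i' k * x i' k) - ∑ k, x i' k * x i k) :=
      mul_le_mul_of_nonneg_left (le_of_lt hs) hβ0
    rw [hAeq]; linarith
  set c : ℝ := σ (β * γ / 2) - σm with hcdef
  set ε : ℝ := σ (-(β * γ / 2)) - σm with hεdef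
  have hε0 : 0 ≤ ε := sub_nonneg.mpr (hσ_ge _)
  set D : Matrix (Fin n) (Fin n) ℝ := Matrix.of fun i i' => σ (A i i') - σm with hDdef
  have hdom : ∀ j, ∑ i ∈ Finset.univ.erase j, |D i j| < D j j := by
    intro j
    have hDjj : D j j = c := by rw [hDdef]; simp [hAdiag, hcdef]
    have hbound : ∀ i ∈ Finset.univ.erase j, |D i j| ≤ ε := by
      intro i hi
      have hne : i ≠ j := Finset.ne_of_mem_erase hi
      have h1 : σ (A i j) - σm ≤ ε := by
        rw [hεdef]
        have := hmono (hAoff i j hne)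
        linarith
      have h2 : 0 ≤ σ (A i j) - σm := sub_nonneg.mpr (hσ_ge _)
      rw [hDdef]
      simpa [abs_of_nonneg h2] using h1
    calc ∑ i ∈ Finset.univ.erase j, |D i j| ≤ ∑ _i ∈ Finset.univ.erase j, ε :=
          Finset.sum_le_sum hbound
      _ = ((n - 1 : ℕ) : ℝ) * ε := by
          rw [Finset.sum_const, Finset.card_erase_of_mem (Finset.mem_univ _)]
          simp [nsmul_eq_mul]
      _ ≤ (n : ℝ) * ε := by
          apply mul_le_mul_of_nonneg_right _ hε0
          exact_mod_cast Nat.sub_le n 1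
      _ < c := hβkey
      _ = D j j := hDjj.symm
  have hφp₀ : φ p₀ ≠ 0 := by
    intro h0
    obtain ⟨v, hv0, hMv⟩ := (Matrix.exists_mulVec_eq_zero_iff).mpr h0
    have hu : Matrix.vecMul v (Mf p₀) = 0 := by
      have h2 : v ⬝ᵥ ((Mf p₀ * (Mf p₀).transpose).mulVec v) = 0 := by
        rw [hMv]; exact dotProduct_zero v
      have h1 : (Matrix.vecMul v (Mf p₀)) ⬝ᵥ (Matrix.vecMul v (Mf p₀)) = 0 := by
        calc Matrix.vecMul v (Mf p₀) ⬝ᵥ Matrix.vecMul v (Mf p₀)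
            = Matrix.vecMul v (Mf p₀) ⬝ᵥ ((Mf p₀).transpose.mulVec v) := by
              rw [Matrix.mulVec_transpose]
          _ = v ⬝ᵥ ((Mf p₀).mulVec ((Mf p₀).transpose.mulVec v)) :=
              (Matrix.dotProduct_mulVec v (Mf p₀) _).symm
          _ = v ⬝ᵥ ((Mf p₀ * (Mf p₀).transpose).mulVec v) := by rw [Matrix.mulVec_mulVec]
          _ = 0 := h2
      exact dotProduct_self_eq_zero.mp h1
    have hones : ∑ i, v i = 0 := by
      have := congrFun hu (Sum.inr ())
      simp only [Matrix.vecMul, dotProduct, hMf] at this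
      simpa using this
    have hcols : ∀ i', ∑ i, v i * σ (A i i') = 0 := by
      intro i'
      have h3 := congrFun hu (Sum.inl (J i'))
      have h4 : ∑ i, v i * (σ (A i i') / Real.sqrt m) = 0 := by
        simpa [Matrix.vecMul, dotProduct, hMf, hAdef, hp₀def] using h3
      have h5 : (∑ i, v i * σ (A i i')) / Real.sqrt m = 0 := by
        rw [← h4, Finset.sum_div]
        exact Finset.sum_congr rfl fun i _ => by ring
      rcases div_eq_zero_iff.mp h5 with h6 | h6
      · exact h6
      · exact absurd h6 hsqm
    have hvD : Matrix.vecMul v D = 0 := by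
      funext i'
      have : Matrix.vecMul v D i' = ∑ i, v i * (σ (A i i') - σm) := by
        simp [Matrix.vecMul, dotProduct, hDdef]
      rw [this]
      have : ∑ i, v i * (σ (A i i') - σm)
          = (∑ i, v i * σ (A i i')) - σm * ∑ i, v i := by
        rw [Finset.mul_sum, ← Finset.sum_sub_distrib]
        exact Finset.sum_congr rfl fun i _ => by ring
      rw [this, hcols i', hones]
      simp
    exact hv0 (vecMul_eq_zero_dom D hdom v hvD)
  -- conclusion
  have hincl : {p : E | (Mf p).rank < n} ⊆ {p : E | φ p = 0} := by
    intro p hp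
    by_contra h0
    have hunit : IsUnit (Mf p * (Mf p).transpose) :=
      (Matrix.isUnit_iff_isUnit_det _).mpr (isUnit_iff_ne_zero.mpr h0)
    have hr := Matrix.rank_of_isUnit _ hunit
    have hle : n ≤ (Mf p).rank := by
      calc n = Fintype.card (Fin n) := (Fintype.card_fin n).symm
        _ = (Mf p * (Mf p).transpose).rank := hr.symm
        _ ≤ (Mf p).rank := Matrix.rank_mul_le_left _ _
    exact absurd hp (not_lt.mpr hle)
  exact measure_mono_null hincl (nullZeroProp_weights m m' φ hφa ⟨p₀, hφp₀⟩)
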